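/- Let α = 2π − 3·arccos(1/3), a = arccos((1+3cos α)/4), γ = arccos((cos(π/3) − cos(π/3)·cos a)/(sin(π/3)·sin a)), θ = 2π − (arccos(1/3) + 2·arccos((1 − cos a)/(√3 sin a)) + γ), and b = arccos(cos a / 2 + (√3/2)·sin a · cos θ). Then b > 2π/3. -/

import Mathlib

theorem stmt_8 (α a γ θ b : ℝ)
    (hα : α = 2 * Real.pi - 3 * Real.arccos (1/3))
    (ha : a = Real.arccos ((1 + 3 * Real.cos α) / 4))
    (hγ : γ = Real.arccos ((Real.cos (Real.pi/3) - Real.cos (Real.pi/3) * Real.cos a) /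
      (Real.sin (Real.pi/3) * Real.sin a)))
    (hθ : θ = 2 * Real.pi - (Real.arccos (1/3) +
      2 * Real.arccos ((1 - Real.cos a) / (Real.sqrt 3 * Real.sin a)) + γ))
    (hb : b = Real.arccos (Real.cos a / 2 + (Real.sqrt 3 / 2) * Real.sin a * Real.cos θ)) :
    b > 2 * Real.pi / 3 := by
  have hc1 : Real.cos (Real.arccos (1/3)) = 1/3 :=
    Real.cos_arccos (by norm_num) (by norm_num)
  have hs1 : Real.sin (Real.arccos (1/3)) = 2 * Real.sqrt 2 / 3 := by
    rw [Real.sin_arccos]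
    rw [show (1:ℝ) - (1/3)^2 = (2/3)^2 * 2 by norm_num, Real.sqrt_mul (by positivity),
      Real.sqrt_sq (by norm_num)]
    ring
  have hcosα : Real.cos α = -23/27 := by
    rw [hα, Real.cos_two_pi_sub, Real.cos_three_mul, hc1]; norm_num
  have ha' : a = Real.arccos (-7/18) := by rw [ha, hcosα]; norm_num
  have hcosa : Real.cos a = -7/18 := by
    rw [ha']; exact Real.cos_arccos (by norm_num) (by norm_num)
  have hsina : Real.sin a = 5 * Real.sqrt 11 / 18 := by
    rw [ha', Real.sin_arccos]
    rw [show (1:ℝ) - (-7/18)^2 = (5/18)^2 * 11 by norm_num, Real.sqrt_mul (by positivity),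
      Real.sqrt_sq (by norm_num)]
    ring
  have h33 : Real.sqrt 3 * Real.sqrt 11 = Real.sqrt 33 := by
    rw [← Real.sqrt_mul (by norm_num)]; norm_num
  have h33pos : (0:ℝ) < Real.sqrt 33 := Real.sqrt_pos.mpr (by norm_num)
  have h33sq : Real.sqrt 33 ^ 2 = 33 := Real.sq_sqrt (by norm_num)
  have h33gt : (5:ℝ) < Real.sqrt 33 := by nlinarith [h33sq, h33pos]
  have h2sq : Real.sqrt 2 ^ 2 = 2 := Real.sq_sqrt (by norm_num)
  have harg : (1 - Real.cos a) / (Real.sqrt 3 * Real.sin a) = 5 / Real.sqrt 33 := by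
    rw [hcosa, hsina]
    rw [show Real.sqrt 3 * (5 * Real.sqrt 11 / 18) = 5 * (Real.sqrt 3 * Real.sqrt 11) / 18 by ring,
      h33, div_eq_div_iff (by positivity) h33pos.ne']
    ring
  have hγ' : γ = Real.arccos (5 / Real.sqrt 33) := by
    rw [hγ, hcosa, hsina, Real.cos_pi_div_three, Real.sin_pi_div_three]
    congr 1
    rw [show Real.sqrt 3 / 2 * (5 * Real.sqrt 11 / 18) = 5 * (Real.sqrt 3 * Real.sqrt 11) / 36 by ring,
      h33, div_eq_div_iff (by positivity) h33pos.ne']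
    ring
  have hm1 : (-1:ℝ) ≤ 5 / Real.sqrt 33 :=
    le_trans (by norm_num : (-1:ℝ) ≤ 0) (by positivity)
  have hm2 : 5 / Real.sqrt 33 ≤ 1 := (div_le_one h33pos).mpr h33gt.le
  have hcg : Real.cos (Real.arccos (5 / Real.sqrt 33)) = 5 / Real.sqrt 33 :=
    Real.cos_arccos hm1 hm2
  have hsg : Real.sin (Real.arccos (5 / Real.sqrt 33)) = 2 * Real.sqrt 2 / Real.sqrt 33 := by
    rw [Real.sin_arccos]
    rw [show (1:ℝ) - (5 / Real.sqrt 33)^2 = (2 / Real.sqrt 33)^2 * 2 by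
      field_simp; nlinarith [h33sq]]
    rw [Real.sqrt_mul (by positivity), Real.sqrt_sq (by positivity)]
    ring
  have hu3 : Real.sqrt 33 ^ 3 = 33 * Real.sqrt 33 := by
    rw [pow_succ, h33sq]
  have hs3 : Real.sqrt 2 ^ 3 = 2 * Real.sqrt 2 := by
    rw [pow_succ, h2sq]
  have hc3g : Real.cos (3 * Real.arccos (5 / Real.sqrt 33)) = 5 / (33 * Real.sqrt 33) := by
    rw [Real.cos_three_mul, hcg, div_pow, hu3]
    field_simp
    ring
  have hs3g : Real.sin (3 * Real.arccos (5 / Real.sqrt 33))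
      = 134 * Real.sqrt 2 / (33 * Real.sqrt 33) := by
    rw [Real.sin_three_mul, hsg, div_pow, mul_pow, hs3, hu3]
    field_simp
    ring
  have hcosθ : Real.cos θ = -59 / (11 * Real.sqrt 33) := by
    rw [hθ, harg, hγ', Real.cos_two_pi_sub,
      show Real.arccos (1/3) + 2 * Real.arccos (5 / Real.sqrt 33) + Real.arccos (5 / Real.sqrt 33)
        = Real.arccos (1/3) + 3 * Real.arccos (5 / Real.sqrt 33) by ring,
      Real.cos_add, hc1, hs1, hc3g, hs3g]
    field_simp
    ring_nf
    linear_combination (-2948) * h2sq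
  have hval : Real.cos a / 2 + Real.sqrt 3 / 2 * Real.sin a * Real.cos θ = -31/33 := by
    rw [hcosa, hsina, hcosθ,
      show Real.sqrt 3 / 2 * (5 * Real.sqrt 11 / 18) = 5 * (Real.sqrt 3 * Real.sqrt 11) / 36 by ring,
      h33]
    field_simp
    ring
  have hb' : b = Real.arccos (-31/33) := by rw [hb, hval]
  have hcosb : Real.cos b = -31/33 := by
    rw [hb']; exact Real.cos_arccos (by norm_num) (by norm_num)
  by_contra h
  push_neg at h
  have hb0 : 0 ≤ b := hb' ▸ Real.arccos_nonneg _
  have h23 : Real.cos (2 * Real.pi / 3) = -(1/2) := by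
    rw [show 2 * Real.pi / 3 = Real.pi - Real.pi / 3 by ring, Real.cos_pi_sub,
      Real.cos_pi_div_three]
  have := Real.cos_le_cos_of_nonneg_of_le_pi hb0 (by
      have := Real.pi_pos; linarith) h
  rw [hcosb, h23] at this
  norm_num at this
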